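/- arXiv:1205.5850 — 4 statements merged into one kernel-verified Lean document; each statement's English description precedes it below -/
import Mathlib

section
/- Let V ∈ C²(ℝⁿ,ℝ) with V(u) → +∞ as |u| → ∞, F = -∇V, f ∈ L²(ℝ,ℝⁿ), and let y : [0,T] → ℝⁿ be C¹ and satisfy ẏ(t) = -½F(y(t)) + f(t) on (0,T). Then for all t ∈ [0,T]: V(y(t)) + ∫_t^T |ẏ(τ)|² dτ ≤ V(y(T)) + ∫_t^T |f(τ)|² dτ. -/
open MeasureTheory

theorem apriori_energy_estimate
    (n : ℕ) (V : EuclideanSpace ℝ (Fin n) → ℝ) (hV : ContDiff ℝ 2 V)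
    -- coercivity: `V(u) → +∞` as `|u| → ∞`:
    (hcoerc : ∀ M : ℝ, ∃ R : ℝ, ∀ u : EuclideanSpace ℝ (Fin n), R < ‖u‖ → M < V u)
    (f : ℝ → EuclideanSpace ℝ (Fin n)) (hf : MemLp f 2 volume)
    (T : ℝ) (hT : 0 < T) (y y' : ℝ → EuclideanSpace ℝ (Fin n))
    (hderiv : ∀ t ∈ Set.Icc (0 : ℝ) T, HasDerivAt y (y' t) t)
    (hy'cont : ContinuousOn y' (Set.Icc 0 T))
    -- the equation `ẏ = -½ F(y) + f` with `F = -∇V` on `(0,T)`: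
    (heq : ∀ t ∈ Set.Ioo (0 : ℝ) T,
      y' t = -(1 / 2 : ℝ) • (-(gradient V (y t))) + f t) :
    ∀ t ∈ Set.Icc (0 : ℝ) T,
      V (y t) + ∫ τ in t..T, ‖y' τ‖ ^ 2 ≤ V (y T) + ∫ τ in t..T, ‖f τ‖ ^ 2 := by
  intro t ht
  rcases eq_or_lt_of_le ht.2 with rfl | htT
  · simp
  have htT' : t ≤ T := ht.2
  have hVd : Differentiable ℝ V := hV.differentiable (by norm_num)
  have hgrad_cont : Continuous (fun x => gradient V x) := by
    have h1 : Continuous (fun x => fderiv ℝ V x) := hV.continuous_fderiv (by norm_num)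
    exact (InnerProductSpace.toDual ℝ _).symm.continuous.comp h1
  set g : ℝ → ℝ := fun τ => inner ℝ (gradient V (y τ)) (y' τ) with hg
  have hycont : ContinuousOn y (Set.Icc 0 T) := fun τ hτ =>
    (hderiv τ hτ).continuousAt.continuousWithinAt
  have hgcont : ContinuousOn g (Set.Icc 0 T) :=
    ContinuousOn.inner (hgrad_cont.comp_continuousOn hycont) hy'cont
  have hsub : Set.Icc t T ⊆ Set.Icc 0 T := Set.Icc_subset_Icc ht.1 le_rfl
  -- FTC
  have hderivg : ∀ τ ∈ Set.Ioo t T, HasDerivWithinAt (fun s => V (y s)) (g τ) (Set.Ioi τ) τ := by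
    intro τ hτ
    have hτ' : τ ∈ Set.Icc (0 : ℝ) T := ⟨le_trans ht.1 hτ.1.le, hτ.2.le⟩
    have h1 := ((hVd (y τ)).hasGradientAt).hasFDerivAt
    have h2 := h1.comp_hasDerivAt τ (hderiv τ hτ')
    have h3 : HasDerivAt (fun s => V (y s)) (g τ) τ := by
      exact h2
    exact h3.hasDerivWithinAt
  have hgint : IntervalIntegrable g volume t T := by
    apply ContinuousOn.intervalIntegrable
    rw [Set.uIcc_of_le htT']
    exact hgcont.mono hsub
  have hftc : ∫ τ in t..T, g τ = V (y T) - V (y t) :=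
    intervalIntegral.integral_eq_sub_of_hasDeriv_right_of_le htT'
      (hV.continuous.comp_continuousOn (hycont.mono hsub)) hderivg hgint
  -- integrability facts
  have hy'int : IntervalIntegrable (fun τ => ‖y' τ‖ ^ 2) volume t T := by
    apply ContinuousOn.intervalIntegrable
    rw [Set.uIcc_of_le htT']
    exact ((hy'cont.mono hsub).norm.pow 2)
  have hfsq : Integrable (fun τ => ‖f τ‖ ^ 2) volume := by
    have := hf.integrable_norm_rpow two_ne_zero ENNReal.ofNat_ne_top
    simpa [ENNReal.toReal_ofNat, Real.rpow_natCast] using this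
  have hfint : IntervalIntegrable (fun τ => ‖f τ‖ ^ 2) volume t T :=
    hfsq.intervalIntegrable
  -- pointwise inequality on `Ioo t T`
  have hptwise : ∀ τ ∈ Set.Ioo t T, ‖y' τ‖ ^ 2 - ‖f τ‖ ^ 2 ≤ g τ := by
    intro τ hτ
    have hτ0 : τ ∈ Set.Ioo (0 : ℝ) T := ⟨lt_of_le_of_lt ht.1 hτ.1, hτ.2⟩
    have heq' := heq τ hτ0
    have hgradval : gradient V (y τ) = (2 : ℝ) • (y' τ - f τ) := by
      have : y' τ = (1 / 2 : ℝ) • gradient V (y τ) + f τ := by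
        rw [heq']; module
      rw [this]; module
    have hexp : g τ = 2 * ‖y' τ‖ ^ 2 - 2 * inner ℝ (y' τ) (f τ) := by
      rw [hg]
      simp only [hgradval, real_inner_smul_left, inner_sub_left,
        real_inner_self_eq_norm_sq, real_inner_comm (f τ) (y' τ)]
      ring_nf
    have hns : ‖y' τ - f τ‖ ^ 2 = ‖y' τ‖ ^ 2 - 2 * inner ℝ (y' τ) (f τ) + ‖f τ‖ ^ 2 := by
      rw [@norm_sub_sq_real]
    have hnn : (0 : ℝ) ≤ ‖y' τ - f τ‖ ^ 2 := sq_nonneg _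
    rw [hexp]
    nlinarith [hnn, hns]
  -- a.e. version and monotonicity of integral
  have hzero : ∀ᵐ τ ∂(volume.restrict (Set.Icc t T)), τ ∉ ({t, T} : Set ℝ) := by
    refine (ae_iff).2 ?_
    have h1 : (volume.restrict (Set.Icc t T)) ({t, T} : Set ℝ) = 0 := by
      refine le_antisymm (le_trans (Measure.restrict_apply_le _ _) ?_) zero_le
      simp [Set.Finite.measure_zero (Set.toFinite ({t, T} : Set ℝ)) volume]
    have he : {a | ¬ a ∉ ({t, T} : Set ℝ)} = ({t, T} : Set ℝ) := by ext a; simp; tauto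
    rw [he]; exact h1
  have hae : (fun τ => ‖y' τ‖ ^ 2 - ‖f τ‖ ^ 2) ≤ᵐ[volume.restrict (Set.Icc t T)] g := by
    filter_upwards [ae_restrict_mem measurableSet_Icc, hzero] with τ h1 h2
    simp only [Set.mem_insert_iff, Set.mem_singleton_iff, not_or] at h2
    exact hptwise τ ⟨lt_of_le_of_ne h1.1 (Ne.symm h2.1), lt_of_le_of_ne h1.2 h2.2⟩
  have hmono : ∫ τ in t..T, (‖y' τ‖ ^ 2 - ‖f τ‖ ^ 2) ≤ ∫ τ in t..T, g τ :=
    intervalIntegral.integral_mono_ae_restrict htT' (hy'int.sub hfint) hgint hae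
  rw [hftc, intervalIntegral.integral_sub hy'int hfint] at hmono
  linarith
end

section
/- Let V ∈ C²(ℝⁿ,ℝ) with V(u) → +∞ as |u| → ∞, F = -∇V, f ∈ L²(ℝ,ℝⁿ), and let y be a solution of ẏ = -½F(y) + f on [0,T] with prescribed value y(T). Then sup_{t ∈ [0,T]} |y(t)| < ∞ and ẏ ∈ L²(0,T;ℝⁿ), with bounds depending only on V(y(T)), ‖f‖_{L²}, and V. -/
open MeasureTheory

open scoped RealInnerProductSpace

theorem apriori_bound_solution
    (n : ℕ) (V : EuclideanSpace ℝ (Fin n) → ℝ) (hV : ContDiff ℝ 2 V)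
    -- coercivity: `V(u) → +∞` as `|u| → ∞`:
    (hcoerc : ∀ M : ℝ, ∃ R : ℝ, ∀ u : EuclideanSpace ℝ (Fin n), R < ‖u‖ → M < V u) :
    -- bounds depending only on `V(y(T))`, `‖f‖_{L²}` (and `V` itself):
    ∃ B : ℝ → ℝ → ℝ,
      ∀ (T : ℝ), 0 < T → ∀ f : ℝ → EuclideanSpace ℝ (Fin n), MemLp f 2 volume →
        ∀ y y' : ℝ → EuclideanSpace ℝ (Fin n),
          (∀ t ∈ Set.Icc (0 : ℝ) T, HasDerivAt y (y' t) t) →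
          ContinuousOn y' (Set.Icc 0 T) →
          (∀ t ∈ Set.Ioo (0 : ℝ) T,
            y' t = -(1 / 2 : ℝ) • (-(gradient V (y t))) + f t) →
          (∀ t ∈ Set.Icc (0 : ℝ) T,
              ‖y t‖ ≤ B (V (y T)) ((eLpNorm f 2 volume).toReal)) ∧
            ∫ t in (0 : ℝ)..T, ‖y' t‖ ^ 2 ≤
              B (V (y T)) ((eLpNorm f 2 volume).toReal) := by
  classical
  -- a global lower bound `m` for `V`
  obtain ⟨R₀, hR₀⟩ := hcoerc 0
  obtain ⟨x₀, -, hx₀⟩ :=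
    (isCompact_closedBall (0 : EuclideanSpace ℝ (Fin n)) (max R₀ 0)).exists_isMinOn
      ⟨0, Metric.mem_closedBall_self (le_max_right _ _)⟩ hV.continuous.continuousOn
  set m : ℝ := min (V x₀) 0 with hm_def
  have hm : ∀ u, m ≤ V u := by
    intro u
    by_cases h : ‖u‖ ≤ max R₀ 0
    · exact (min_le_left _ _).trans
        (hx₀ (by simpa [Metric.mem_closedBall, dist_zero_right] using h))
    · exact (min_le_right _ _).trans
        (hR₀ u ((le_max_left _ _).trans_lt (lt_of_not_ge h))).le
  refine ⟨fun a b => max (Classical.choose (hcoerc (a + b ^ 2))) (a + b ^ 2 - m), ?_⟩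
  intro T hT f hf y y' hy hy' hODE
  set b : ℝ := (eLpNorm f 2 volume).toReal with hb
  -- `‖f‖²` is integrable with integral `b²`
  have hrpow : ∀ x : ℝ, x ^ ((2 : ENNReal).toReal) = x ^ 2 := by
    intro x
    rw [show ((2 : ENNReal).toReal) = ((2 : ℕ) : ℝ) by norm_num, Real.rpow_natCast]
  have hfint : Integrable (fun s => ‖f s‖ ^ 2) volume := by
    have := hf.integrable_norm_rpow (by norm_num) (by norm_num)
    simpa [hrpow] using this
  have hI_nonneg : 0 ≤ ∫ s, ‖f s‖ ^ 2 := integral_nonneg fun s => by positivity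
  have hIb : ∫ s, ‖f s‖ ^ 2 = b ^ 2 := by
    have h1 := hf.eLpNorm_eq_integral_rpow_norm (by norm_num) (by norm_num)
    have h2 : b = (∫ s, ‖f s‖ ^ 2) ^ ((2 : ℝ)⁻¹) := by
      rw [hb, h1, ENNReal.toReal_ofReal (by positivity)]
      simp only [hrpow]
      norm_num
    rw [h2, ← Real.rpow_natCast (((∫ s, ‖f s‖ ^ 2) ^ ((2 : ℝ)⁻¹))) 2,
      ← Real.rpow_mul hI_nonneg]
    norm_num
  -- continuity facts
  have ycont : ContinuousOn y (Set.Icc 0 T) := fun s hs =>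
    (hy s hs).continuousAt.continuousWithinAt
  have hVdiff : Differentiable ℝ V := hV.differentiable (by norm_num)
  have hgradcont : Continuous (fun x => gradient V x) := by
    have h1 : Continuous (fderiv ℝ V) := hV.continuous_fderiv (by norm_num)
    exact (InnerProductSpace.toDual ℝ _).symm.continuous.comp h1
  set φ : ℝ → ℝ := fun s => ⟪gradient V (y s), y' s⟫ with hφ_def
  have hφcont : ContinuousOn φ (Set.Icc 0 T) :=
    (hgradcont.comp_continuousOn ycont).inner hy'
  have hφderiv : ∀ s ∈ Set.Icc (0 : ℝ) T, HasDerivAt (fun τ => V (y τ)) (φ s) s := by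
    intro s hs
    have h1 := ((hVdiff (y s)).hasGradientAt.hasFDerivAt).comp_hasDerivAt s (hy s hs)
    simpa [hφ_def, InnerProductSpace.toDual_apply_apply, Function.comp_def] using h1
  -- pointwise estimate on the open interval
  have hpt : ∀ s ∈ Set.Ioo (0 : ℝ) T, ‖y' s‖ ^ 2 ≤ φ s + ‖f s‖ ^ 2 := by
    intro s hs
    have hODEs : y' s = (1 / 2 : ℝ) • gradient V (y s) + f s := by
      rw [hODE s hs]; simp
    have h1 : ⟪y' s, f s⟫ ≤ ‖y' s‖ * ‖f s‖ := real_inner_le_norm _ _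
    have h2 : ‖y' s‖ ^ 2 = (1 / 2 : ℝ) * ⟪y' s, gradient V (y s)⟫ + ⟪y' s, f s⟫ := by
      conv_lhs => rw [← real_inner_self_eq_norm_sq]
      conv_lhs => rw [hODEs]
      rw [inner_add_right, real_inner_smul_right, ← hODEs]
    have h3 : ⟪y' s, gradient V (y s)⟫ = φ s := real_inner_comm _ _
    nlinarith [sq_nonneg (‖y' s‖ - ‖f s‖)]
  -- key energy estimate
  have key : ∀ t ∈ Set.Icc (0 : ℝ) T,
      V (y t) + ∫ s in t..T, ‖y' s‖ ^ 2 ≤ V (y T) + b ^ 2 := by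
    intro t ht
    have htT : t ≤ T := ht.2
    have hsub : Set.Icc t T ⊆ Set.Icc 0 T := Set.Icc_subset_Icc ht.1 le_rfl
    have hFTC : ∫ s in t..T, φ s = V (y T) - V (y t) := by
      apply intervalIntegral.integral_eq_sub_of_hasDerivAt
      · intro s hs
        rw [Set.uIcc_of_le htT] at hs
        exact hφderiv s (hsub hs)
      · apply ContinuousOn.intervalIntegrable
        rw [Set.uIcc_of_le htT]
        exact hφcont.mono hsub
    have hy'int : IntervalIntegrable (fun s => ‖y' s‖ ^ 2) volume t T := by
      apply ContinuousOn.intervalIntegrable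
      rw [Set.uIcc_of_le htT]
      exact ((hy'.mono hsub).norm).pow 2
    have hφint : IntervalIntegrable φ volume t T := by
      apply ContinuousOn.intervalIntegrable
      rw [Set.uIcc_of_le htT]
      exact hφcont.mono hsub
    have hfint2 : IntervalIntegrable (fun s => ‖f s‖ ^ 2) volume t T :=
      hfint.intervalIntegrable
    have hmono : ∫ s in t..T, ‖y' s‖ ^ 2 ≤ ∫ s in t..T, (φ s + ‖f s‖ ^ 2) := by
      apply intervalIntegral.integral_mono_ae_restrict htT hy'int (hφint.add hfint2)
      have hane : ∀ᵐ s ∂(volume : Measure ℝ), s ≠ t ∧ s ≠ T := by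
        have h1 : ∀ᵐ s ∂(volume : Measure ℝ), s ≠ t := by
          simpa using ae_iff.mpr (by simp [measure_singleton t, Set.setOf_eq_eq_singleton'])
        have h2 : ∀ᵐ s ∂(volume : Measure ℝ), s ≠ T := by
          simpa using ae_iff.mpr (by simp [measure_singleton T, Set.setOf_eq_eq_singleton'])
        exact h1.and h2
      filter_upwards [ae_restrict_mem measurableSet_Icc, ae_restrict_of_ae hane]
        with s hs hne
      have hsIoo : s ∈ Set.Ioo (0 : ℝ) T :=
        ⟨lt_of_le_of_lt ht.1 (lt_of_le_of_ne hs.1 (Ne.symm hne.1)), lt_of_le_of_ne hs.2 hne.2⟩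
      exact hpt s hsIoo
    have hsplit : ∫ s in t..T, (φ s + ‖f s‖ ^ 2) =
        (∫ s in t..T, φ s) + ∫ s in t..T, ‖f s‖ ^ 2 :=
      intervalIntegral.integral_add hφint hfint2
    have hfb : ∫ s in t..T, ‖f s‖ ^ 2 ≤ b ^ 2 := by
      rw [← hIb, intervalIntegral.integral_of_le htT]
      exact setIntegral_le_integral hfint (Filter.Eventually.of_forall fun s => by positivity)
    have := hmono.trans_eq hsplit
    rw [hFTC] at this
    linarith
  constructor
  · intro t ht
    have h1 := key t ht
    have h2 : 0 ≤ ∫ s in t..T, ‖y' s‖ ^ 2 :=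
      intervalIntegral.integral_nonneg ht.2 fun s _ => by positivity
    have hVle : V (y t) ≤ V (y T) + b ^ 2 := by linarith
    have h3 : ‖y t‖ ≤ Classical.choose (hcoerc (V (y T) + b ^ 2)) := by
      by_contra h
      exact absurd (Classical.choose_spec (hcoerc (V (y T) + b ^ 2)) (y t)
        (lt_of_not_ge h)) (by linarith)
    exact h3.trans (le_max_left _ _)
  · have h1 := key 0 ⟨le_rfl, hT.le⟩
    have h2 := hm (y 0)
    exact le_trans (by linarith) (le_max_right _ _)
end

section
/- Let F : ℝ → ℝ satisfy F(y) = 0 for |y| < 1, and let f(t) = 1/(1+|t|). Then there is no continuously differentiable function y : [0,∞) → ℝ satisfying ẏ(t) = -½F(y(t)) + f(t) for t > 0 together with y(t) → 0 as t → +∞. -/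
open Filter

theorem no_incoming_trajectory_flat_nonhyperbolic
    (F : ℝ → ℝ) (hF : ∀ v : ℝ, |v| < 1 → F v = 0)
    (y : ℝ → ℝ)
    (hy : ∀ t : ℝ, 0 < t →
      HasDerivAt y (-(1 / 2) * F (y t) + 1 / (1 + |t|)) t) :
    ¬ Tendsto y atTop (nhds 0) := by
  intro hlim
  have h1 : ∀ᶠ t in atTop, |y t| < 1 / 2 := by
    have := hlim (Metric.ball_mem_nhds (0 : ℝ) (by norm_num : (0:ℝ) < 1/2))
    filter_upwards [this] with t ht
    simpa [Real.dist_eq] using ht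
  obtain ⟨T, hT⟩ := (h1.and (eventually_gt_atTop 0)).exists_forall_of_atTop
  have hTpos : 0 < T := (hT T le_rfl).2
  -- For s ≥ T, the function g s = y s - log (1 + s) has derivative 0.
  set g : ℝ → ℝ := fun s => y s - Real.log (1 + s) with hg
  have hgderiv : ∀ s, T ≤ s → HasDerivAt g 0 s := by
    intro s hs
    have hspos : 0 < s := lt_of_lt_of_le hTpos hs
    have hys : HasDerivAt y (1 / (1 + s)) s := by
      have := hy s hspos
      have hFz : F (y s) = 0 := hF _ ((hT s hs).1.trans (by norm_num))
      rw [hFz, abs_of_pos hspos] at this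
      simpa using this
    have hlog : HasDerivAt (fun s => Real.log (1 + s)) (1 / (1 + s)) s := by
      have h1s : (1 : ℝ) + s ≠ 0 := by positivity
      simpa using (((hasDerivAt_id s).const_add 1).log h1s)
    have h := hys.sub hlog
    rw [sub_self] at h
    exact h
  have hconst : ∀ t, T ≤ t → g t = g T := by
    intro t ht
    have := constant_of_has_deriv_right_zero (f := g) (a := T) (b := t)
      (fun x hx => ((hgderiv x hx.1).continuousAt).continuousWithinAt)
      (fun x hx => ((hgderiv x hx.1).hasDerivWithinAt))
    exact this t (Set.right_mem_Icc.mpr ht)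
  -- so y t = log (1 + t) + g T for t ≥ T, which tends to ∞
  set c : ℝ := g T with hc
  have hyeq : ∀ t, T ≤ t → y t = Real.log (1 + t) + c := by
    intro t ht
    have := hconst t ht
    simp only [hg] at this
    linarith [this]
  set t₀ : ℝ := max T (Real.exp (1 - c)) with ht₀
  have htT : T ≤ t₀ := le_max_left _ _
  have hlog_ge : 1 - c ≤ Real.log (1 + t₀) := by
    have h1 : Real.exp (1 - c) ≤ t₀ := le_max_right _ _
    have h2 : Real.exp (1 - c) ≤ 1 + t₀ := by linarith
    calc 1 - c = Real.log (Real.exp (1 - c)) := (Real.log_exp _).symm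
      _ ≤ Real.log (1 + t₀) := Real.log_le_log (Real.exp_pos _) h2
  have hyt : (1 : ℝ) ≤ y t₀ := by
    rw [hyeq t₀ htT]; linarith
  have := (hT t₀ htT).1
  have := abs_lt.mp this
  linarith
end

section
/- Let F : ℝ → ℝ satisfy F(y) = -2y² for |y| < 1, and let f(t) = 1/(1+|t|). Then there is no continuously differentiable function y : [0,∞) → ℝ satisfying ẏ(t) = -½F(y(t)) + f(t) = y(t)² + f(t) for t > 0 (whenever |y(t)| < 1) together with y(t) → 0 as t → +∞. -/
open Filter

theorem no_incoming_trajectory_quadratic_nonhyperbolic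
    (F : ℝ → ℝ) (hF : ∀ v : ℝ, |v| < 1 → F v = -2 * v ^ 2)
    (y : ℝ → ℝ)
    (hy : ∀ t : ℝ, 0 < t →
      HasDerivAt y (-(1 / 2) * F (y t) + 1 / (1 + |t|)) t) :
    ¬ Tendsto y atTop (nhds 0) := by
  intro htend
  have hball : ∀ᶠ t in atTop, |y t| < 1 / 2 := by
    have := htend (Metric.ball_mem_nhds 0 (by norm_num : (0:ℝ) < 1/2))
    simpa [Metric.mem_ball, Real.dist_eq] using this
  obtain ⟨N, hN⟩ := eventually_atTop.mp hball
  set T : ℝ := max N 1 with hTdef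
  have hT1 : (1:ℝ) ≤ T := le_max_right N 1
  have hTpos : (0:ℝ) < T := lt_of_lt_of_le one_pos hT1
  set g : ℝ → ℝ := fun s => y s - Real.log (1 + s) with hgdef
  have hg' : ∀ t ∈ Set.Ioi T, HasDerivAt g ((y t) ^ 2) t := by
    intro t ht
    have htT : T < t := ht
    have ht0 : 0 < t := lt_trans hTpos htT
    have hyt : |y t| < 1 / 2 := hN t (le_of_lt (lt_of_le_of_lt (le_max_left N 1) htT))
    have hyt1 : |y t| < 1 := lt_trans hyt (by norm_num)
    have h1 := hy t ht0
    rw [hF _ hyt1, abs_of_pos ht0] at h1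
    have h1' : HasDerivAt y ((y t) ^ 2 + 1 / (1 + t)) t := by
      have : -(1 / 2) * (-2 * (y t) ^ 2) + 1 / (1 + t) = (y t) ^ 2 + 1 / (1 + t) := by
        ring
      rwa [this] at h1
    have hne : (1 : ℝ) + t ≠ 0 := by positivity
    have hlog : HasDerivAt (fun s : ℝ => Real.log (1 + s)) (1 / (1 + t)) t := by
      have := (Real.hasDerivAt_log hne).comp t ((hasDerivAt_id t).const_add 1)
      simpa [one_div, Function.comp_def] using this
    have := h1'.sub hlog
    have h2 : HasDerivAt g ((y t) ^ 2 + 1 / (1 + t) - 1 / (1 + t)) t := this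
    simpa using h2
  have hcont : ContinuousOn g (Set.Ici T) := by
    intro t ht
    have ht0 : 0 < t := lt_of_lt_of_le hTpos ht
    have hne : (1 : ℝ) + t ≠ 0 := by positivity
    have hylog : ContinuousAt (fun s : ℝ => Real.log (1 + s)) t :=
      (Real.continuousAt_log hne).comp (by fun_prop)
    exact ((hy t ht0).continuousAt.sub hylog).continuousWithinAt
  have hmono : MonotoneOn g (Set.Ici T) := by
    apply monotoneOn_of_deriv_nonneg (convex_Ici T) hcont
    · intro t ht
      rw [interior_Ici] at ht
      exact (hg' t ht).differentiableAt.differentiableWithinAt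
    · intro t ht
      rw [interior_Ici] at ht
      rw [(hg' t ht).deriv]
      positivity
  have hlb : ∀ᶠ t in atTop, g T + Real.log (1 + t) ≤ y t := by
    filter_upwards [eventually_ge_atTop T] with t ht
    have := hmono (Set.self_mem_Ici) ht ht
    simp only [hgdef] at this ⊢
    linarith
  have hdiv : Tendsto (fun t : ℝ => g T + Real.log (1 + t)) atTop atTop := by
    apply tendsto_atTop_add_const_left
    exact Real.tendsto_log_atTop.comp (tendsto_atTop_add_const_left atTop 1 tendsto_id)
  exact not_tendsto_nhds_of_tendsto_atTop (tendsto_atTop_mono' atTop hlb hdiv) 0 htend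
end
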